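/- Let G = (V,E) be a directed graph with a designated pivot vertex x. Let R⁺ be the set of vertices reachable from x and R⁻ the set of vertices that can reach x. Then the edge set S = {(x,v) : v ∈ R⁺} ∪ {(v,x) : v ∈ R⁻} is a certified shortcut of G: adding S preserves the transitive closure, and every edge of S has a certificate in E ∪ S. -/
import Mathlib


/-- Reachability in the edge set `F`. -/
def Reach {V : Type*} (F : Set (V × V)) (u v : V) : Prop :=
  Relation.ReflTransGen (fun a b => (a, b) ∈ F) u v

/-- The pivot star `S = {(x,v) : v ∈ R⁺} ∪ {(v,x) : v ∈ R⁻}` is a certified shortcut: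
every edge of `S` respects reachability in `G`, and every edge of `S` is either an
original edge or has a length-2 certificate in `E ∪ S`. -/
theorem pivot_star_is_certified_shortcut {V : Type*} (E : Set (V × V)) (x : V) :
    let Rplus : Set V := {v | Reach E x v ∧ v ≠ x}
    let Rminus : Set V := {v | Reach E v x ∧ v ≠ x}
    let S : Set (V × V) := {e | (e.1 = x ∧ e.2 ∈ Rplus) ∨ (e.2 = x ∧ e.1 ∈ Rminus)}
    (∀ e ∈ S, Reach E e.1 e.2) ∧
      (∀ e ∈ S, e ∈ E ∨ ∃ w : V, (e.1, w) ∈ E ∪ S ∧ (w, e.2) ∈ E ∪ S) := by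
  intro Rplus Rminus S
  constructor
  · rintro ⟨a, b⟩ (⟨h1, h2, _⟩ | ⟨h1, h2, _⟩) <;> simp_all
  · rintro ⟨a, b⟩ (⟨h1, h2, hne⟩ | ⟨h1, h2, hne⟩)
    · -- a = x, Reach E x b, b ≠ x : take last step
      subst h1
      rcases (Relation.ReflTransGen.cases_tail h2) with h | ⟨w, hw, hwb⟩
      · exact absurd h.symm (by simpa using hne.symm)
      · by_cases hwx : w = a
        · subst hwx; exact Or.inl hwb
        · exact Or.inr ⟨w, Or.inr (Or.inl ⟨rfl, hw, hwx⟩), Or.inl hwb⟩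
    · -- b = x, Reach E a x, a ≠ x : take first step
      subst h1
      rcases (Relation.ReflTransGen.cases_head h2) with h | ⟨w, haw, hwx⟩
      · exact absurd h (by simpa using hne)
      · by_cases hw : w = b
        · subst hw; exact Or.inl haw
        · exact Or.inr ⟨w, Or.inl haw, Or.inr (Or.inr ⟨rfl, hwx, hw⟩)⟩
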